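/- (Apolarity Lemma, reduced case.) Let k be a field of characteristic 0 or characteristic > d, let F ∈ k[x₁,…,x_n] be homogeneous of degree d, and let ℓ₁,…,ℓ_r be nonzero, pairwise non-proportional linear forms with coefficient vectors a₁,…,a_r ∈ k^n. Then F lies in the k-linear span of ℓ₁^d,…,ℓ_r^d if and only if every homogeneous polynomial θ ∈ k[y₁,…,y_n] that vanishes at each of the points a₁,…,a_r satisfies θ ∘ F = 0, i.e. the homogeneous vanishing ideal of the points {a₁,…,a_r} is contained in the apolar ideal F^⊥. -/

import Mathlib

open MvPolynomial

set_option linter.unusedSectionVars false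

/-- The linear form with coefficient vector `a`. -/
noncomputable def linForm {k : Type*} [CommRing k] {n : Type*} [Fintype n]
    (a : n → k) : MvPolynomial n k :=
  ∑ i, C (a i) * X i

/-- The apolarity action: `diffAction θ F` is the result `θ ∘ F` of applying the
constant-coefficient differential operator obtained from `θ` by substituting
`y_i ↦ ∂/∂x_i` to the polynomial `F`. -/
noncomputable def diffAction {k : Type*} [CommSemiring k] {σ : Type*}
    (θ F : MvPolynomial σ k) : MvPolynomial σ k :=
  ∑ a ∈ θ.support, ∑ b ∈ F.support,
    monomial (b - a) (θ.coeff a * F.coeff b * ∏ i ∈ a.support, ((b i).descFactorial (a i) : k))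


section Lemmas

variable {k : Type*} [CommSemiring k] {σ : Type*}

lemma diffAction_eq_sum (θ F : MvPolynomial σ k) {s t : Finset (σ →₀ ℕ)}
    (hs : θ.support ⊆ s) (ht : F.support ⊆ t) :
    diffAction θ F = ∑ a ∈ s, ∑ b ∈ t,
      monomial (b - a) (θ.coeff a * F.coeff b *
        ∏ i ∈ a.support, ((b i).descFactorial (a i) : k)) := by
  rw [diffAction]
  rw [Finset.sum_subset hs (fun a _ ha => by
    simp [MvPolynomial.notMem_support_iff.mp ha])]
  refine Finset.sum_congr rfl fun a _ => ?_
  exact Finset.sum_subset ht (fun b _ hb => by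
    simp [MvPolynomial.notMem_support_iff.mp hb])

lemma descFactorial_prod_support [Fintype σ] (m b : σ →₀ ℕ) :
    ∏ i ∈ m.support, ((b i).descFactorial (m i) : k) =
      ∏ i, ((b i).descFactorial (m i) : k) := by
  refine Finset.prod_subset (Finset.subset_univ _) ?_
  intro i _ hi
  rw [Finsupp.notMem_support_iff.mp hi, Nat.descFactorial_zero, Nat.cast_one]

lemma diffAction_monomial_monomial [Fintype σ] (m b : σ →₀ ℕ) (c e : k) :
    diffAction (monomial m c) (monomial b e) =
      monomial (b - m) (c * e * ∏ i, ((b i).descFactorial (m i) : k)) := by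
  rw [diffAction_eq_sum (monomial m c) (monomial b e)
    (support_monomial_subset (s := m) (a := c))
    (support_monomial_subset (s := b) (a := e))]
  classical
  simp [coeff_monomial, descFactorial_prod_support]

lemma diffAction_add_left (θ ψ F : MvPolynomial σ k) :
    diffAction (θ + ψ) F = diffAction θ F + diffAction ψ F := by
  classical
  rw [diffAction_eq_sum (θ + ψ) F (Finsupp.support_add) (le_refl _),
    diffAction_eq_sum θ F (Finset.subset_union_left) (le_refl _),
    diffAction_eq_sum ψ F (Finset.subset_union_right) (le_refl _),
    ← Finset.sum_add_distrib]
  refine Finset.sum_congr rfl fun a _ => ?_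
  rw [← Finset.sum_add_distrib]
  refine Finset.sum_congr rfl fun b _ => ?_
  rw [coeff_add, add_mul, add_mul, map_add]

lemma diffAction_smul_left (s : k) (θ F : MvPolynomial σ k) :
    diffAction (s • θ) F = s • diffAction θ F := by
  rw [diffAction_eq_sum (s • θ) F (Finsupp.support_smul) (le_refl _),
    diffAction_eq_sum θ F (le_refl _) (le_refl _), Finset.smul_sum]
  refine Finset.sum_congr rfl fun a _ => ?_
  rw [Finset.smul_sum]
  refine Finset.sum_congr rfl fun b _ => ?_
  rw [coeff_smul, smul_monomial, smul_eq_mul, smul_eq_mul]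
  congr 1
  ring

lemma diffAction_add_right (θ F G : MvPolynomial σ k) :
    diffAction θ (F + G) = diffAction θ F + diffAction θ G := by
  classical
  rw [diffAction_eq_sum θ (F + G) (le_refl _) (Finsupp.support_add),
    diffAction_eq_sum θ F (le_refl _) (Finset.subset_union_left),
    diffAction_eq_sum θ G (le_refl _) (Finset.subset_union_right),
    ← Finset.sum_add_distrib]
  refine Finset.sum_congr rfl fun a _ => ?_
  rw [← Finset.sum_add_distrib]
  refine Finset.sum_congr rfl fun b _ => ?_
  rw [coeff_add, mul_add, add_mul, map_add]

lemma diffAction_smul_right (s : k) (θ F : MvPolynomial σ k) :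
    diffAction θ (s • F) = s • diffAction θ F := by
  rw [diffAction_eq_sum θ (s • F) (le_refl _) (Finsupp.support_smul),
    diffAction_eq_sum θ F (le_refl _) (le_refl _), Finset.smul_sum]
  refine Finset.sum_congr rfl fun a _ => ?_
  rw [Finset.smul_sum]
  refine Finset.sum_congr rfl fun b _ => ?_
  rw [coeff_smul, smul_monomial, smul_eq_mul, smul_eq_mul]
  congr 1
  ring

variable (k σ) in
noncomputable def diffActionBilin :
    MvPolynomial σ k →ₗ[k] MvPolynomial σ k →ₗ[k] MvPolynomial σ k :=
  LinearMap.mk₂ k diffAction diffAction_add_left diffAction_smul_left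
    diffAction_add_right diffAction_smul_right

@[simp] lemma diffActionBilin_apply (θ F : MvPolynomial σ k) :
    diffActionBilin k σ θ F = diffAction θ F := rfl

end Lemmas

section Lemmas2

variable {k : Type*} [CommSemiring k] {σ : Type*}

lemma diffAction_C (c : k) (F : MvPolynomial σ k) :
    diffAction (C c) F = C c * F := by
  classical
  rw [show (C c : MvPolynomial σ k) = monomial 0 c from rfl,
    diffAction_eq_sum (monomial 0 c) F (support_monomial_subset) (le_refl _)]
  rw [Finset.sum_singleton]
  conv_rhs => rw [F.as_sum, Finset.mul_sum]
  refine Finset.sum_congr rfl fun b _ => ?_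
  simp [coeff_monomial, C_mul_monomial]

lemma diffAction_monomial_addSingle [Fintype σ] [DecidableEq σ] (i : σ) (m : σ →₀ ℕ) (c : k)
    (F : MvPolynomial σ k) :
    diffAction (monomial (m + Finsupp.single i 1) c) F
      = diffAction (monomial m c) (pderiv i F) := by
  classical
  have key : ∀ (b : σ →₀ ℕ) (e : k),
      diffAction (monomial (m + Finsupp.single i 1) c) (monomial b e)
        = diffAction (monomial m c) (pderiv i (monomial b e)) := by
    intro b e
    rw [pderiv_monomial]
    by_cases hbi : b i = 0
    · rw [diffAction_monomial_monomial, diffAction_monomial_monomial]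
      have h0 : ((b i).descFactorial (((m + Finsupp.single i 1) : σ →₀ ℕ) i) : k) = 0 := by
        simp [hbi, Finsupp.add_apply, Finsupp.single_apply]
      rw [Finset.prod_eq_zero (Finset.mem_univ i) h0, hbi]
      push_cast
      simp
    · rw [diffAction_monomial_monomial, diffAction_monomial_monomial]
      have hidx : b - (m + Finsupp.single i 1) = b - Finsupp.single i 1 - m := by
        rw [add_comm, tsub_add_eq_tsub_tsub]
      rw [hidx]
      congr 1
      simp only [Finsupp.coe_add, Pi.add_apply, Finsupp.coe_tsub, Pi.sub_apply]
      rw [← Finset.mul_prod_erase Finset.univ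
          (fun j => ((b j).descFactorial (m j + Finsupp.single i 1 j) : k)) (Finset.mem_univ i),
        ← Finset.mul_prod_erase Finset.univ
          (fun j => ((b j - Finsupp.single i 1 j).descFactorial (m j) : k)) (Finset.mem_univ i)]
      have h1 : ((b i).descFactorial (m i + Finsupp.single i 1 i) : k)
          = (b i : k) * ((b i - Finsupp.single i 1 i).descFactorial (m i) : k) := by
        obtain ⟨t, ht⟩ := Nat.exists_eq_succ_of_ne_zero hbi
        rw [Finsupp.single_eq_same, ht, Nat.succ_descFactorial_succ, Nat.succ_sub_one]
        push_cast
        ring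
      have h2 : ∀ j ∈ Finset.univ.erase i,
          ((b j).descFactorial (m j + Finsupp.single i 1 j) : k)
            = ((b j - Finsupp.single i 1 j).descFactorial (m j) : k) := by
        intro j hj
        rw [Finsupp.single_eq_of_ne (Finset.mem_erase.mp hj).1]
        simp
      rw [Finset.prod_congr rfl h2, h1]
      push_cast
      ring
  have : (diffActionBilin k σ (monomial (m + Finsupp.single i 1) c))
      = (diffActionBilin k σ (monomial m c)).comp (pderiv i).toLinearMap := by
    refine MvPolynomial.linearMap_ext fun b => LinearMap.ext fun e => ?_
    simp only [single_eq_monomial, LinearMap.comp_apply, Derivation.coeFn_coe,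
      diffActionBilin_apply]
    exact key b e
  exact DFunLike.congr_fun this F

end Lemmas2
section Lemmas3

variable {k : Type*} [CommRing k] {σ : Type*} [Fintype σ] [DecidableEq σ]

lemma pderiv_linForm (a : σ → k) (i : σ) :
    pderiv i (linForm a) = C (a i) := by
  rw [linForm, map_sum]
  rw [Finset.sum_eq_single i
    (fun j _ hj => by rw [pderiv_C_mul, pderiv_X, Pi.single_eq_of_ne hj, mul_zero])
    (fun h => absurd (Finset.mem_univ i) h)]
  rw [pderiv_C_mul, pderiv_X, Pi.single_eq_same, mul_one]

lemma pderiv_linForm_pow (a : σ → k) (i : σ) (d : ℕ) :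
    pderiv i (linForm a ^ d) = C ((d : k) * a i) * linForm a ^ (d - 1) := by
  rw [Derivation.leibniz_pow, pderiv_linForm, smul_eq_mul, nsmul_eq_mul, map_mul, C_eq_coe_nat]
  ring

lemma descFactorial_mul_succ (d e : ℕ) :
    d.descFactorial (e + 1) = d * (d - 1).descFactorial e := by
  cases d with
  | zero => simp
  | succ t => rw [Nat.succ_descFactorial_succ, Nat.succ_sub_one]

lemma diffAction_monomial_linForm_pow (a : σ → k) :
    ∀ (e : ℕ) (m : σ →₀ ℕ), (∑ j, m j) = e → ∀ (d : ℕ) (c : k),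
    diffAction (monomial m c) (linForm a ^ d) =
      C (c * (d.descFactorial e : k) * ∏ j, a j ^ m j) * linForm a ^ (d - e) := by
  intro e
  induction e with
  | zero =>
    intro m hm d c
    have hm0 : m = 0 := by
      ext j
      exact (Finset.sum_eq_zero_iff.mp hm) j (Finset.mem_univ j)
    subst hm0
    rw [show ((monomial (0 : σ →₀ ℕ)) c : MvPolynomial σ k) = C c from rfl, diffAction_C]
    simp
  | succ e ih =>
    intro m hm d c
    have hex : ∃ i, m i ≠ 0 := by
      by_contra h
      push_neg at h
      simp [h] at hm
    obtain ⟨i, hi⟩ := hex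
    have hle : Finsupp.single i 1 ≤ m := by
      rw [Finsupp.single_le_iff]
      omega
    set m' : σ →₀ ℕ := m - Finsupp.single i 1 with hm'
    have hmm : m' + Finsupp.single i 1 = m := tsub_add_cancel_of_le hle
    have hsum' : (∑ j, m' j) = e := by
      have h1 : (∑ j, m' j) + (∑ j, (Finsupp.single i 1 : σ →₀ ℕ) j) = ∑ j, m j := by
        rw [← Finset.sum_add_distrib]
        refine Finset.sum_congr rfl fun j _ => ?_
        rw [← Finsupp.add_apply, hmm]
      have h2 : (∑ j, (Finsupp.single i 1 : σ →₀ ℕ) j) = 1 := by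
        simp [Finsupp.single_apply]
      omega
    rw [← hmm, diffAction_monomial_addSingle, pderiv_linForm_pow,
      ← smul_eq_C_mul, diffAction_smul_right, ih m' hsum' (d - 1) c, smul_eq_C_mul,
      ← mul_assoc, ← map_mul]
    have hexp : d - 1 - e = d - (e + 1) := by omega
    rw [hexp]
    congr 2
    have hprodm : (∏ j, a j ^ m j) = a i * ∏ j, a j ^ m' j := by
      rw [← Finset.mul_prod_erase Finset.univ (fun j => a j ^ m j) (Finset.mem_univ i),
        ← Finset.mul_prod_erase Finset.univ (fun j => a j ^ m' j) (Finset.mem_univ i),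
        ← mul_assoc]
      have hmi : m i = m' i + 1 := by
        rw [← hmm]
        simp
      rw [Finset.prod_congr rfl (fun j hj => by
        rw [show m j = m' j by
          rw [← hmm, Finsupp.add_apply,
            Finsupp.single_eq_of_ne (Finset.mem_erase.mp hj).1, add_zero]])]
      rw [hmi]
      ring
    rw [hmm, hprodm, descFactorial_mul_succ]
    push_cast
    ring
  
end Lemmas3
section Lemmas4

variable {k : Type*} [CommRing k] {σ : Type*} [Fintype σ] [DecidableEq σ]

lemma degree_eq_univ_sum (m : σ →₀ ℕ) : m.degree = ∑ j, m j := by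
  rw [Finsupp.degree]
  refine Finset.sum_subset (Finset.subset_univ _) ?_
  intro j _ hj
  exact Finsupp.notMem_support_iff.mp hj

lemma diffAction_sum_left (s : Finset (σ →₀ ℕ)) (f : (σ →₀ ℕ) → MvPolynomial σ k)
    (F : MvPolynomial σ k) :
    diffAction (∑ m ∈ s, f m) F = ∑ m ∈ s, diffAction (f m) F :=
  map_sum ((diffActionBilin k σ).flip F) f s

lemma diffAction_isHomogeneous_linForm_pow (a : σ → k) {θ : MvPolynomial σ k} {e : ℕ}
    (hθ : θ.IsHomogeneous e) (d : ℕ) :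
    diffAction θ (linForm a ^ d) =
      C ((d.descFactorial e : k) * eval a θ) * linForm a ^ (d - e) := by
  conv_lhs => rw [θ.as_sum]
  rw [diffAction_sum_left]
  have hterm : ∀ m ∈ θ.support,
      diffAction (monomial m (coeff m θ)) (linForm a ^ d)
        = C ((d.descFactorial e : k)) * C (coeff m θ * ∏ j, a j ^ m j) * linForm a ^ (d - e) := by
    intro m hm
    have hdeg : (∑ j, m j) = e := by
      rw [← degree_eq_univ_sum, Finsupp.degree_eq_weight_one]
      exact hθ (MvPolynomial.mem_support_iff.mp hm)
    rw [diffAction_monomial_linForm_pow a (∑ j, m j) m rfl d (coeff m θ), hdeg, ← map_mul]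
    congr 2
    ring
  rw [Finset.sum_congr rfl hterm, ← Finset.sum_mul, ← Finset.mul_sum, ← map_sum, ← map_mul,
    eval_eq']

end Lemmas4
section FieldLemmas

variable {k : Type*} [Field k]

lemma cast_factorial_ne_zero {d : ℕ} (hchar : ringChar k = 0 ∨ d < ringChar k)
    {t : ℕ} (ht : t ≤ d) : (t.factorial : k) ≠ 0 := by
  rcases hchar with h0 | hlt
  · have : CharZero k := by
      have := ringChar.charP k
      rw [h0] at this
      exact CharP.charP_to_charZero k
    exact_mod_cast Nat.cast_ne_zero.mpr t.factorial_ne_zero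
  · have hp : (ringChar k).Prime := by
      rcases CharP.char_is_prime_or_zero k (ringChar k) with h | h
      · exact h
      · omega
    rw [Ne, CharP.cast_eq_zero_iff k (ringChar k)]
    rw [Nat.Prime.dvd_factorial hp]
    omega

lemma isHomogeneous_linForm {σ : Type*} [Fintype σ] (a : σ → k) :
    (linForm a).IsHomogeneous 1 := by
  rw [linForm]
  apply MvPolynomial.IsHomogeneous.sum
  intro i _
  simpa using (isHomogeneous_C σ (a i)).mul (isHomogeneous_X k i)

lemma isHomogeneous_linForm_pow {σ : Type*} [Fintype σ] (a : σ → k) (d : ℕ) :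
    (linForm a ^ d).IsHomogeneous d := by
  simpa using (isHomogeneous_linForm a).pow d

lemma finiteDimensional_homogeneousSubmodule (σ : Type*) [Finite σ] (d : ℕ) :
    FiniteDimensional k (MvPolynomial.homogeneousSubmodule σ k d) := by
  apply Submodule.finiteDimensional_of_le (S₂ := MvPolynomial.restrictTotalDegree σ k d)
  intro p hp
  rw [MvPolynomial.mem_restrictTotalDegree]
  exact MvPolynomial.IsHomogeneous.totalDegree_le hp

end FieldLemmas
section Nondeg

variable {k : Type*} [Field k] {σ : Type*} [Fintype σ] [DecidableEq σ]

lemma finsupp_eq_of_le_of_degree_eq {m m' : σ →₀ ℕ} (hle : m ≤ m')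
    (h : m.degree = m'.degree) : m = m' := by
  rw [degree_eq_univ_sum, degree_eq_univ_sum] at h
  ext j
  exact (Finset.sum_eq_sum_iff_of_le (fun i _ => Finsupp.le_def.mp hle i)).mp h j
    (Finset.mem_univ j)

lemma coeff_zero_diffAction_monomial {θ : MvPolynomial σ k} {d : ℕ}
    (hθ : θ.IsHomogeneous d) {m : σ →₀ ℕ} (hm : m.degree = d) :
    coeff 0 (diffAction θ (monomial m 1)) =
      coeff m θ * ∏ j ∈ m.support, ((m j).factorial : k) := by
  have hsub : θ.support ⊆ θ.support ∪ {m} := Finset.subset_union_left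
  rw [diffAction_eq_sum θ (monomial m 1) hsub support_monomial_subset]
  simp only [Finset.sum_singleton]
  rw [MvPolynomial.coeff_sum]
  rw [Finset.sum_eq_single_of_mem m (Finset.mem_union_right _ (Finset.mem_singleton_self m))]
  · rw [coeff_monomial, if_pos (tsub_self m), coeff_monomial, if_pos rfl, mul_one]
    congr 1
    exact Finset.prod_congr rfl fun j _ => by rw [Nat.descFactorial_self]
  · intro m' _ hne
    by_cases hc : coeff m' θ = 0
    · rw [hc, zero_mul, zero_mul, map_zero, coeff_zero]
    · have hdeg' : m'.degree = d := by
        rw [Finsupp.degree_eq_weight_one]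
        exact hθ hc
      have h0 : ¬ (m - m' = 0) := by
        intro h0
        exact hne (finsupp_eq_of_le_of_degree_eq (tsub_eq_zero_iff_le.mp h0)
          (by rw [hm, hdeg'])).symm
      rw [coeff_monomial, if_neg h0]

end Nondeg

/-- The Apolarity Lemma (reduced case): if `F` is homogeneous of degree `d` over a field of
characteristic `0` or `> d`, and `ℓ₁, …, ℓ_r` are nonzero pairwise non-proportional linear
forms with coefficient vectors `a 1, …, a r`, then `F` lies in the linear span of
`ℓ₁^d, …, ℓ_r^d` if and only if every homogeneous polynomial vanishing at all the points
`a i` annihilates `F`, i.e. the homogeneous vanishing ideal of the points is contained in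
the apolar ideal `F^⊥`. -/
theorem apolarity_lemma {k : Type*} [Field k] {n d r : ℕ}
    (hchar : ringChar k = 0 ∨ d < ringChar k)
    (F : MvPolynomial (Fin n) k) (hF : F.IsHomogeneous d)
    (a : Fin r → Fin n → k) (hne : ∀ i, a i ≠ 0)
    (hprop : ∀ i j, i ≠ j → ∀ c : k, a i ≠ c • a j) :
    F ∈ Submodule.span k (Set.range fun i => linForm (a i) ^ d) ↔
      ∀ θ : MvPolynomial (Fin n) k, (∃ e, θ.IsHomogeneous e) →
        (∀ i, eval (a i) θ = 0) → diffAction θ F = 0 := by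
  constructor
  · -- forward direction
    rintro hspan θ ⟨e, hθ⟩ hvan
    have hker : Submodule.span k (Set.range fun i => linForm (a i) ^ d) ≤
        LinearMap.ker (diffActionBilin k (Fin n) θ) := by
      rw [Submodule.span_le]
      rintro _ ⟨i, rfl⟩
      rw [SetLike.mem_coe, LinearMap.mem_ker, diffActionBilin_apply,
        diffAction_isHomogeneous_linForm_pow (a i) hθ d, hvan i, mul_zero, map_zero, zero_mul]
    simpa using hker hspan
  · -- backward direction
    intro H
    set V := MvPolynomial.homogeneousSubmodule (Fin n) k d with hVdef
    haveI : FiniteDimensional k V := finiteDimensional_homogeneousSubmodule (Fin n) d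
    set B : V →ₗ[k] Module.Dual k V :=
      LinearMap.domRestrict₁₂ ((diffActionBilin k (Fin n)).compr₂ (lcoeff k 0)) V V with hBdef
    have hBapply : ∀ (θ G : V), B θ G = coeff 0 (diffAction (θ : MvPolynomial (Fin n) k)
        (G : MvPolynomial (Fin n) k)) := fun _ _ => rfl
    -- nondegeneracy / injectivity
    have hinj : Function.Injective B := by
      rw [injective_iff_map_eq_zero]
      intro θ hθ0
      have hcoeff : ∀ m : Fin n →₀ ℕ, coeff m (θ : MvPolynomial (Fin n) k) = 0 := by
        intro m
        by_cases hdm : m.degree = d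
        · have h1 : B θ ⟨monomial m 1, isHomogeneous_monomial 1 hdm⟩ = 0 := by
            rw [hθ0]; rfl
          rw [hBapply, coeff_zero_diffAction_monomial θ.2 hdm] at h1
          have hprodne : (∏ j ∈ m.support, ((m j).factorial : k)) ≠ 0 := by
            rw [Finset.prod_ne_zero_iff]
            intro j hj
            refine cast_factorial_ne_zero hchar ?_
            calc m j ≤ m.degree := by
                  rw [Finsupp.degree]
                  exact Finset.single_le_sum (fun _ _ => Nat.zero_le _) hj
              _ = d := hdm
          exact (mul_eq_zero.mp h1).resolve_right hprodne
        · exact θ.2.coeff_eq_zero hdm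
      ext : 1
      rw [ZeroMemClass.coe_zero]
      exact MvPolynomial.ext _ _ fun m => by rw [hcoeff m, coeff_zero]
    have hsurj : Function.Surjective B :=
      (LinearMap.injective_iff_surjective_of_finrank_eq_finrank
        (Subspace.dual_finrank_eq).symm).mp hinj
    -- the span inside V
    have hlin : ∀ i, (linForm (a i) ^ d).IsHomogeneous d := fun i =>
      isHomogeneous_linForm_pow (a i) d
    set g : Fin r → V := fun i => ⟨linForm (a i) ^ d, hlin i⟩ with hgdef
    set W' : Submodule k V := Submodule.span k (Set.range g) with hWdef
    suffices hFW : (⟨F, hF⟩ : V) ∈ W' by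
      have hmap := Submodule.mem_map_of_mem (f := V.subtype) hFW
      rw [hWdef, Submodule.map_span] at hmap
      have himg : V.subtype '' Set.range g = Set.range fun i => linForm (a i) ^ d := by
        ext x
        constructor
        · rintro ⟨y, ⟨i, rfl⟩, rfl⟩
          exact ⟨i, rfl⟩
        · rintro ⟨i, rfl⟩
          exact ⟨g i, ⟨i, rfl⟩, rfl⟩
      rw [himg] at hmap
      simpa using hmap
    by_contra hFW
    have hmk : (Submodule.Quotient.mk (⟨F, hF⟩ : V) : V ⧸ W') ≠ 0 := by
      rwa [Ne, Submodule.Quotient.mk_eq_zero]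
    obtain ⟨φ, hφ⟩ : ∃ φ : Module.Dual k (V ⧸ W'),
        φ (Submodule.Quotient.mk (⟨F, hF⟩ : V)) ≠ 0 := by
      by_contra h
      push_neg at h
      exact hmk ((Module.forall_dual_apply_eq_zero_iff k _).mp h)
    obtain ⟨θ', hθ'⟩ : ∃ θ' : V, B θ' = φ.comp W'.mkQ := hsurj _
    have hhom : (θ' : MvPolynomial (Fin n) k).IsHomogeneous d := θ'.2
    have hvan : ∀ i, eval (a i) (θ' : MvPolynomial (Fin n) k) = 0 := by
      intro i
      have h1 : B θ' (g i) = 0 := by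
        rw [hθ']
        have hgW : W'.mkQ (g i) = 0 := by
          rw [Submodule.mkQ_apply, Submodule.Quotient.mk_eq_zero]
          exact Submodule.subset_span ⟨i, rfl⟩
        rw [LinearMap.comp_apply, hgW, map_zero]
      rw [hBapply] at h1
      rw [show ((g i : V) : MvPolynomial (Fin n) k) = linForm (a i) ^ d from rfl,
        diffAction_isHomogeneous_linForm_pow (a i) hhom d, Nat.sub_self, pow_zero, mul_one] at h1
      rw [MvPolynomial.coeff_zero_C] at h1
      have hfact : ((d.descFactorial d : ℕ) : k) ≠ 0 := by
        rw [Nat.descFactorial_self]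
        exact cast_factorial_ne_zero hchar le_rfl
      exact (mul_eq_zero.mp h1).resolve_left hfact
    have hzero : diffAction (θ' : MvPolynomial (Fin n) k) F = 0 := H _ ⟨d, hhom⟩ hvan
    have hFzero : φ (Submodule.Quotient.mk (⟨F, hF⟩ : V)) = 0 := by
      have := hBapply θ' ⟨F, hF⟩
      rw [hθ', hzero, coeff_zero] at this
      rw [← this, LinearMap.comp_apply, Submodule.mkQ_apply]
    exact hφ hFzero
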